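/- If the monodromy of a flat line bundle around a ramification point is −1, i.e. p(c) = −1 for the loop c = w″_γ w″_β w″_α w′_γ w′_β w′_α, then the 2×2 matrix product P = S · U(γ) · L(β) · U(α) equals the identity, where S = [[0,1],[1,0]], U(α) = [[a′, a⁺],[0, a″]], L(β) = [[b′, 0],[b⁺, b″]], U(γ) = [[c′, c⁺],[0, c″]], with entries in an abelian group (written multiplicatively, with formal sums) given by a parallel-transport homomorphism p on the fundamental groupoid satisfying: a⁺ = p((w′_γ w′_β)⁻¹), b⁺ = p((w′_α w″_γ)⁻¹), c⁺ = p((w″_β w″_α)⁻¹), a′ = p(w′_α), a″ = p(w″_α), b′ = p(w′_β), b″ = p(w″_β), c′ = p(w′_γ), c″ = p(w″_γ), and p(w″_γ w″_β w″_α) · p(w′_γ w′_β w′_α) = −1. -/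
import Mathlib


/-- the 2×2 matrix computation underlying triviality of the monodromy of the
nonabelianised connection around a branch point.  Over a field `K`, with invertible
parallel transports `xa', xa'', xb', xb'', xc', xc''` satisfying the monodromy relation
`xc'' * xb'' * xa'' * (xc' * xb' * xa') = -1` (monodromy `-1` around the ramification
point), and off-diagonal entries `a⁺ = (xc' * xb')⁻¹`, `b⁺ = (xa' * xc'')⁻¹`,
`c⁺ = (xb'' * xa'')⁻¹`, the product `S · U(γ) · L(β) · U(α)` is the identity matrix. -/
theorem monodromy_matrix_product_eq_one
    {K : Type*} [Field K] (xa' xa'' xb' xb'' xc' xc'' : K)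
    (hmon : xc'' * xb'' * xa'' * (xc' * xb' * xa') = -1) :
    (!![(0 : K), 1; 1, 0] *
      !![xc', (xb'' * xa'')⁻¹; 0, xc''] *
      !![xb', 0; (xa' * xc'')⁻¹, xb''] *
      !![xa', (xc' * xb')⁻¹; 0, xa'']) = 1 := by
  have h0 : xc'' * xb'' * xa'' * (xc' * xb' * xa') ≠ 0 := by rw [hmon]; norm_num
  have ha' : xa' ≠ 0 := by intro h; simp [h] at h0
  have ha'' : xa'' ≠ 0 := by intro h; simp [h] at h0
  have hb' : xb' ≠ 0 := by intro h; simp [h] at h0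
  have hb'' : xb'' ≠ 0 := by intro h; simp [h] at h0
  have hc' : xc' ≠ 0 := by intro h; simp [h] at h0
  have hc'' : xc'' ≠ 0 := by intro h; simp [h] at h0
  have e1 : (xb'' * xa'')⁻¹ = -(xc'' * (xc' * xb' * xa')) := by
    field_simp; linear_combination hmon
  have e2 : (xa' * xc'')⁻¹ = -(xb'' * xa'' * (xc' * xb')) := by
    field_simp; linear_combination hmon
  have e3 : (xc' * xb')⁻¹ = -(xc'' * xb'' * xa'' * xa') := by
    field_simp; linear_combination hmon
  rw [e1, e2, e3]
  ext i j
  fin_cases i <;> fin_cases j <;>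
    simp [Matrix.mul_apply, Fin.sum_univ_succ]
  · linear_combination -hmon
  · linear_combination (xc'' * xb'' * xa'') * hmon
  · left; linear_combination (xc' * xb') * hmon
  · linear_combination (-(xc'' * xb'' * xa'' * (xc' * xb' * xa')) - 1) * hmon
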